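/- arXiv:2303.01415 — 6 statements merged into one kernel-verified Lean document; each statement's English description precedes it below -/
import Mathlib

section
/- Let 𝒰 be a finite ep-metric space, let Z₁, Z₂ ⊆ 𝒰 be subsets (each with the induced ep-metric), and let x ∈ Z₁ ∩ Z₂. Let k be a positive integer with k ≤ |Z₁| and k ≤ |Z₂|. Let N_i be the k-complete neighbourhood of x in Z_i (i = 1, 2), and let N be the k-complete neighbourhood of x in Z = Z₁ ∪ Z₂. Then N ⊆ N₁ ∪ N₂. -/
open scoped ENNReal

/-- `N` is a complete neighbourhood of `x` in the subset `A` of the ambient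
ep-metric space (with the induced ep-metric): `N ⊆ A` contains `x`, all
distances from `x` within `N` are finite, and `N` is the closed ball in `A`
about `x` of radius `s(N) = max_{y ∈ N} d(x,y)`. -/
def IsCompleteNbhd {U : Type*} [PseudoEMetricSpace U] (A : Set U) (x : U)
    (N : Set U) : Prop :=
  N ⊆ A ∧ x ∈ N ∧ (∀ y ∈ N, edist x y < ⊤) ∧
    N = {y ∈ A | edist x y ≤ ⨆ z ∈ N, edist x z}

/-- `N` is the `k`-complete neighbourhood of `x` in `A`: the smallest complete
neighbourhood of `x` in `A` with at least `k` elements. -/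
def IsKComplete {U : Type*} [PseudoEMetricSpace U] (A : Set U) (x : U)
    (k : ℕ) (N : Set U) : Prop :=
  IsCompleteNbhd A x N ∧ k ≤ N.ncard ∧
    ∀ M : Set U, IsCompleteNbhd A x M → k ≤ M.ncard → N ⊆ M

/-- A closed ball of finite radius is a complete neighbourhood. -/
lemma ball_completeNbhd {U : Type*} [PseudoEMetricSpace U] (A : Set U) (x : U)
    (hx : x ∈ A) (r : ℝ≥0∞) (hr : r < ⊤) :
    IsCompleteNbhd A x {y ∈ A | edist x y ≤ r} := by
  refine ⟨fun y hy => hy.1, ⟨hx, by simp⟩, fun y hy => lt_of_le_of_lt hy.2 hr, ?_⟩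
  have hsup : (⨆ z ∈ {y ∈ A | edist x y ≤ r}, edist x z) ≤ r :=
    iSup₂_le fun z hz => hz.2
  ext y
  constructor
  · rintro ⟨hyA, hyr⟩
    exact ⟨hyA, le_iSup₂ (f := fun z _ => edist x z) y ⟨hyA, hyr⟩⟩
  · rintro ⟨hyA, hys⟩
    exact ⟨hyA, hys.trans hsup⟩

/-- If `x ∈ Z₁ ∩ Z₂`, `Nᵢ` is the `k`-complete neighbourhood of `x` in `Zᵢ`,
and `N` is the `k`-complete neighbourhood of `x` in `Z₁ ∪ Z₂`, then
`N ⊆ N₁ ∪ N₂`. -/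
theorem kComplete_union_subset {U : Type*} [Fintype U] [PseudoEMetricSpace U]
    (Z₁ Z₂ : Set U) (x : U) (hx₁ : x ∈ Z₁) (hx₂ : x ∈ Z₂)
    (k : ℕ) (hk : 0 < k) (hk₁ : k ≤ Z₁.ncard) (hk₂ : k ≤ Z₂.ncard)
    (N₁ N₂ N : Set U)
    (hN₁ : IsKComplete Z₁ x k N₁) (hN₂ : IsKComplete Z₂ x k N₂)
    (hN : IsKComplete (Z₁ ∪ Z₂) x k N) :
    N ⊆ N₁ ∪ N₂ := by
  obtain ⟨⟨hN₁A, hxN₁, hfin₁, heq₁⟩, hk₁', hmin₁⟩ := hN₁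
  obtain ⟨⟨hN₂A, hxN₂, hfin₂, heq₂⟩, hk₂', hmin₂⟩ := hN₂
  obtain ⟨_, _, hNmin⟩ := hN
  set s₁ := ⨆ z ∈ N₁, edist x z with hs₁
  set s₂ := ⨆ z ∈ N₂, edist x z with hs₂
  have hs₁t : s₁ < ⊤ :=
    (Set.Finite.ciSup_lt_iff (Set.toFinite N₁) ⟨x, hxN₁, by simp⟩).2 hfin₁
  have hs₂t : s₂ < ⊤ :=
    (Set.Finite.ciSup_lt_iff (Set.toFinite N₂) ⟨x, hxN₂, by simp⟩).2 hfin₂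
  rcases le_total s₁ s₂ with h | h
  · have hM := ball_completeNbhd (Z₁ ∪ Z₂) x (Or.inl hx₁) s₁ hs₁t
    have hsub : N₁ ⊆ {y ∈ Z₁ ∪ Z₂ | edist x y ≤ s₁} := fun z hz =>
      ⟨Or.inl (hN₁A hz), le_iSup₂ (f := fun z _ => edist x z) z hz⟩
    have hNM := hNmin _ hM
      (hk₁'.trans (Set.ncard_le_ncard hsub (Set.toFinite _)))
    intro y hy
    obtain ⟨hyA, hyr⟩ := hNM hy
    cases hyA with
    | inl h1 => left; rw [heq₁]; exact ⟨h1, hyr⟩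
    | inr h2 => right; rw [heq₂]; exact ⟨h2, hyr.trans h⟩
  · have hM := ball_completeNbhd (Z₁ ∪ Z₂) x (Or.inl hx₁) s₂ hs₂t
    have hsub : N₂ ⊆ {y ∈ Z₁ ∪ Z₂ | edist x y ≤ s₂} := fun z hz =>
      ⟨Or.inr (hN₂A hz), le_iSup₂ (f := fun z _ => edist x z) z hz⟩
    have hNM := hNmin _ hM
      (hk₂'.trans (Set.ncard_le_ncard hsub (Set.toFinite _)))
    intro y hy
    obtain ⟨hyA, hyr⟩ := hNM hy
    cases hyA with
    | inl h1 => left; rw [heq₁]; exact ⟨h1, hyr.trans h⟩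
    | inr h2 => right; rw [heq₂]; exact ⟨h2, hyr⟩
end

section
/- Let Z be a finite ep-metric space, S > 0, and let k ≥ 1 be an integer. For t ≥ S, the natural map π₀R_t(k-N) → π₀V_t(k-N) is a bijection. Concretely: two points of Z are connected by a chain in which each consecutive pair {u,v} with u ≠ v satisfies d(u,v) ≤ t and is contained in some k-bounded neighbourhood of some point (the connectivity relation of V_t(k-N)) if and only if they are connected by a chain of rays {x,y} with y in some k-bounded neighbourhood of x and d(x,y) ≤ t (the connectivity relation of R_t(k-N)). -/
open scoped ENNReal

/-- `N` is a `k`-bounded neighbourhood of `x` (for the distance bound `S`):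
`N ⊆ Z(x,S)` contains `x` and has at most `k + 1` elements. -/
def IsKBdd {Z : Type*} [PseudoEMetricSpace Z] (S : ℝ≥0∞) (k : ℕ) (x : Z)
    (N : Set Z) : Prop :=
  x ∈ N ∧ N ⊆ {y | edist x y ≤ S} ∧ N.ncard ≤ k + 1

/-- A pair `{w, u}` with `edist w u ≤ S` is a `k`-bounded neighbourhood of `w`. -/
lemma isKBdd_pair {Z : Type*} [PseudoEMetricSpace Z] (S : ℝ≥0∞) (k : ℕ) (hk : 1 ≤ k)
    (w u : Z) (h : edist w u ≤ S) : IsKBdd S k w {w, u} := by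
  refine ⟨Or.inl rfl, ?_, ?_⟩
  · rintro y (rfl | rfl)
    · simp
    · exact h
  · calc ({w, u} : Set Z).ncard ≤ ({u} : Set Z).ncard + 1 := Set.ncard_insert_le _ _
      _ = 2 := by simp
      _ ≤ k + 1 := by omega

/-- Lemma 16: for `t ≥ S`, the map `π₀R_t(k-N) → π₀V_t(k-N)` is a bijection:
two points of `Z` are connected by a chain whose consecutive distinct pairs
have distance `≤ t` and lie in a common `k`-bounded neighbourhood iff they are
connected by a chain of rays `{x,y}` with `y` in some `k`-bounded neighbourhood
of `x` and `d(x,y) ≤ t`. -/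
theorem pi0_ray_eq_pi0_kBdd {Z : Type*} [Fintype Z] [PseudoEMetricSpace Z]
    (S : ℝ≥0∞) (hS : 0 < S) (k : ℕ) (hk : 1 ≤ k)
    (t : ℝ≥0∞) (ht : S ≤ t) :
    ∀ y z : Z,
      Relation.ReflTransGen (fun u v =>
          (u ≠ v ∧ edist u v ≤ t ∧ ∃ N : Set Z, IsKBdd S k u N ∧ v ∈ N) ∨
          (v ≠ u ∧ edist v u ≤ t ∧ ∃ N : Set Z, IsKBdd S k v N ∧ u ∈ N)) y z ↔
        Relation.ReflTransGen (fun u v => u ≠ v ∧ edist u v ≤ t ∧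
          ∃ (w : Z) (N : Set Z), IsKBdd S k w N ∧ u ∈ N ∧ v ∈ N) y z := by
  intro y z
  constructor
  · intro h
    induction h with
    | refl => exact .refl
    | tail _ h ih =>
      refine ih.tail ?_
      rcases h with ⟨hne, hle, N, hN, hv⟩ | ⟨hne, hle, N, hN, hu⟩
      · exact ⟨hne, hle, _, N, hN, hN.1, hv⟩
      · exact ⟨fun e => hne e.symm, by rwa [edist_comm], _, N, hN, hu, hN.1⟩
  · intro h
    induction h with
    | refl => exact .refl
    | @tail u v _ h ih =>
      obtain ⟨hne, hle, w, N, ⟨hwN, hsub, _⟩, huN, hvN⟩ := h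
      have hwu : edist w u ≤ S := hsub huN
      have hwv : edist w v ≤ S := hsub hvN
      refine ih.trans (Relation.ReflTransGen.trans (b := w) ?_ ?_)
      · by_cases hu : u = w
        · rw [hu]
        · exact .single (Or.inr ⟨fun e => hu e.symm, le_trans hwu ht, {w, u},
            isKBdd_pair S k hk w u hwu, Or.inr rfl⟩)
      · by_cases hv : w = v
        · rw [hv]
        · exact .single (Or.inl ⟨hv, le_trans hwv ht, {w, v},
            isKBdd_pair S k hk w v hwv, Or.inr rfl⟩)
end

section
/- Let Z be a finite ep-metric space, S > 0, an integer k ≥ 2, and fix x ∈ Z. Let N(x) be the union of the Vietoris–Rips complexes V(N) over all k-bounded neighbourhoods N of x, and R(x) ⊆ N(x) the associated ray subcomplex. Then: (1) if t ≤ S, the map π₀N(x)_t → π₀V_t(Z(x,S)) is a bijection; concretely, any two points of Z(x,S) joined by a chain in Z(x,S) with consecutive distances ≤ t are joined by a chain whose consecutive pairs lie in common k-bounded neighbourhoods of x and have mutual distance ≤ t, and conversely. (2) If t ≥ S, then R(x)_t is connected (π₀R(x)_t is a single point) and the maps π₀R(x)_t → π₀N(x)_t → π₀V_t(Z(x,S))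 are bijections; in particular the graph on Z(x,S) with edges given by pairs at distance ≤ t is connected. -/
open scoped ENNReal

/-- Lemma 18: fix `x ∈ Z`, `S > 0` and `k ≥ 2`; work on the ball
`B = Z(x,S) = {y : d(x,y) ≤ S}`.  `N(x)_t` is the graph on `B` whose edges are
pairs `{y,z}`, `y ≠ z`, contained in some `k`-bounded neighbourhood of `x` with
`d(y,z) ≤ t`; `R(x)_t` is the ray graph on `B` whose edges are the pairs
`{x,y}` with `y ∈ B \ {x}` and `d(x,y) ≤ t`; `V_t(Z(x,S))` is the graph on `B`
whose edges are pairs at distance `≤ t`.  Then: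
(1) if `t ≤ S`, the map `π₀N(x)_t → π₀V_t(Z(x,S))` is a bijection;
(2) if `t ≥ S`, then `R(x)_t` is connected and the maps
`π₀R(x)_t → π₀N(x)_t → π₀V_t(Z(x,S))` are bijections. -/
theorem local_nbhd_complex_pi0 {Z : Type*} [Fintype Z] [PseudoEMetricSpace Z]
    (S : ℝ≥0∞) (hS : 0 < S) (k : ℕ) (hk : 2 ≤ k) (x : Z) (t : ℝ≥0∞) :
    (t ≤ S →
      ∀ u v : {y : Z // edist x y ≤ S},
        Relation.ReflTransGen (fun a b : {y : Z // edist x y ≤ S} =>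
            (a : Z) ≠ b ∧ edist (a : Z) b ≤ t ∧
            ∃ N : Set Z, IsKBdd S k x N ∧ (a : Z) ∈ N ∧ (b : Z) ∈ N) u v ↔
          Relation.ReflTransGen (fun a b : {y : Z // edist x y ≤ S} =>
            edist (a : Z) b ≤ t) u v) ∧
    (S ≤ t →
      (∀ u v : {y : Z // edist x y ≤ S},
        Relation.ReflTransGen (fun a b : {y : Z // edist x y ≤ S} =>
            ((a : Z) = x ∧ (b : Z) ≠ x ∧ edist (a : Z) b ≤ t) ∨
            ((b : Z) = x ∧ (a : Z) ≠ x ∧ edist (a : Z) b ≤ t)) u v) ∧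
      (∀ u v : {y : Z // edist x y ≤ S},
        (Relation.ReflTransGen (fun a b : {y : Z // edist x y ≤ S} =>
            ((a : Z) = x ∧ (b : Z) ≠ x ∧ edist (a : Z) b ≤ t) ∨
            ((b : Z) = x ∧ (a : Z) ≠ x ∧ edist (a : Z) b ≤ t)) u v ↔
          Relation.ReflTransGen (fun a b : {y : Z // edist x y ≤ S} =>
            (a : Z) ≠ b ∧ edist (a : Z) b ≤ t ∧
            ∃ N : Set Z, IsKBdd S k x N ∧ (a : Z) ∈ N ∧ (b : Z) ∈ N) u v) ∧
        (Relation.ReflTransGen (fun a b : {y : Z // edist x y ≤ S} =>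
            (a : Z) ≠ b ∧ edist (a : Z) b ≤ t ∧
            ∃ N : Set Z, IsKBdd S k x N ∧ (a : Z) ∈ N ∧ (b : Z) ∈ N) u v ↔
          Relation.ReflTransGen (fun a b : {y : Z // edist x y ≤ S} =>
            edist (a : Z) b ≤ t) u v))) := by

  -- key construction: any edge of `V_t` is an edge of `N(x)_t` via the
  -- 3-element neighbourhood `{x, a, b}`
  have key : ∀ (a b : {y : Z // edist x y ≤ S}), (a : Z) ≠ b → edist (a : Z) b ≤ t →
      ((a : Z) ≠ b ∧ edist (a : Z) b ≤ t ∧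
        ∃ N : Set Z, IsKBdd S k x N ∧ (a : Z) ∈ N ∧ (b : Z) ∈ N) := by
    intro a b hab hd
    refine ⟨hab, hd, {x, (a : Z), (b : Z)}, ⟨by simp, ?_, ?_⟩, by simp, by simp⟩
    · rintro y (rfl | rfl | rfl)
      · simp
      · exact a.2
      · exact b.2
    · have h3 : ({x, (a : Z), (b : Z)} : Set Z).ncard ≤ 3 := by
        calc ({x, (a : Z), (b : Z)} : Set Z).ncard
            ≤ ({(a : Z), (b : Z)} : Set Z).ncard + 1 := Set.ncard_insert_le _ _
          _ ≤ (({(b : Z)} : Set Z).ncard + 1) + 1 := by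
              exact Nat.add_le_add_right (Set.ncard_insert_le _ _) 1
          _ = 3 := by simp
      omega
  -- `V_t` chains refine to `N(x)_t` chains
  have VtoN : ∀ u v : {y : Z // edist x y ≤ S},
      Relation.ReflTransGen (fun a b : {y : Z // edist x y ≤ S} =>
        edist (a : Z) b ≤ t) u v →
      Relation.ReflTransGen (fun a b : {y : Z // edist x y ≤ S} =>
        (a : Z) ≠ b ∧ edist (a : Z) b ≤ t ∧
        ∃ N : Set Z, IsKBdd S k x N ∧ (a : Z) ∈ N ∧ (b : Z) ∈ N) u v := by
    intro u v h
    induction h with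
    | refl => exact Relation.ReflTransGen.refl
    | tail _ hbc ih =>
      rename_i b c _
      by_cases hbc' : (b : Z) = (c : Z)
      · rwa [← Subtype.ext hbc']
      · exact ih.tail (key b c hbc' hbc)
  refine ⟨fun _ u v => ⟨fun h => Relation.ReflTransGen.mono (fun a b hab => hab.2.1) u v h, VtoN u v⟩, fun hSt => ?_⟩
  -- the ray relation and its connectivity
  have xball : edist x x ≤ S := by simp
  have raysymm : Symmetric (fun a b : {y : Z // edist x y ≤ S} =>
      ((a : Z) = x ∧ (b : Z) ≠ x ∧ edist (a : Z) b ≤ t) ∨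
      ((b : Z) = x ∧ (a : Z) ≠ x ∧ edist (a : Z) b ≤ t)) := by
    intro a b h
    rcases h with ⟨h1, h2, h3⟩ | ⟨h1, h2, h3⟩
    · exact Or.inr ⟨h1, h2, by rwa [edist_comm]⟩
    · exact Or.inl ⟨h1, h2, by rwa [edist_comm]⟩
  have tox : ∀ u : {y : Z // edist x y ≤ S},
      Relation.ReflTransGen (fun a b : {y : Z // edist x y ≤ S} =>
        ((a : Z) = x ∧ (b : Z) ≠ x ∧ edist (a : Z) b ≤ t) ∨
        ((b : Z) = x ∧ (a : Z) ≠ x ∧ edist (a : Z) b ≤ t)) u ⟨x, xball⟩ := by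
    intro u
    by_cases hu : (u : Z) = x
    · have : u = ⟨x, xball⟩ := Subtype.ext hu
      rw [this]
    · exact Relation.ReflTransGen.single
        (Or.inr ⟨rfl, hu, by rw [edist_comm]; exact le_trans u.2 hSt⟩)
  have rayconn : ∀ u v : {y : Z // edist x y ≤ S},
      Relation.ReflTransGen (fun a b : {y : Z // edist x y ≤ S} =>
        ((a : Z) = x ∧ (b : Z) ≠ x ∧ edist (a : Z) b ≤ t) ∨
        ((b : Z) = x ∧ (a : Z) ≠ x ∧ edist (a : Z) b ≤ t)) u v := by
    intro u v
    haveI : Std.Symm (fun a b : {y : Z // edist x y ≤ S} =>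
        ((a : Z) = x ∧ (b : Z) ≠ x ∧ edist (a : Z) b ≤ t) ∨
        ((b : Z) = x ∧ (a : Z) ≠ x ∧ edist (a : Z) b ≤ t)) := ⟨fun a b h => raysymm h⟩
    exact (tox u).trans (Std.Symm.symm _ _ (tox v))
  refine ⟨rayconn, fun u v => ⟨⟨?_, fun _ => rayconn u v⟩, ⟨?_, fun h => VtoN u v h⟩⟩⟩
  · intro h
    refine Relation.ReflTransGen.mono (fun a b hab => ?_) u v h
    rcases hab with ⟨h1, h2, h3⟩ | ⟨h1, h2, h3⟩
    · exact key a b (by rw [h1]; exact fun e => h2 e.symm) h3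
    · exact key a b (by rw [h1]; exact h2) h3
  · intro h
    exact Relation.ReflTransGen.mono (fun a b hab => hab.2.1) u v h
end

section
/- Let Z be a finite ep-metric space in which each x ∈ Z has a fixed complete neighbourhood N_x = Z(x, r_x). Then: (1) if t ≤ r_x for all x ∈ Z, the natural maps π₀R_t(N) → π₀V_t(N) → π₀V_t(Z) are bijections; (2) if t ≥ r_x for all x ∈ Z, the natural map π₀R_t(N) → π₀V_t(N) is a bijection; (3) if t ≥ S ≥ r_x for all x ∈ Z, the natural map π₀R_S(N) → π₀R_t(N) is a bijection. Here the maps on path components are induced by inclusions of graphs on the common vertex set Z, and a bijection means the corresponding connectivity relations coincide. -/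
open scoped ENNReal

section

variable {Z : Type*} [PseudoEMetricSpace Z]

/-- Edge relation of `V_t(Z)`: pairs at distance `≤ t`. -/
def rvRel (t : ℝ≥0∞) (a b : Z) : Prop := edist a b ≤ t

/-- Edge relation of the neighbourhood complex `V_t(N)` for the system of
complete neighbourhoods `N_x = Z(x, r_x)`: pairs `{a,b}`, `a ≠ b`, with
`d(a,b) ≤ t` and `{a,b} ⊆ N_w` for some `w`. -/
def rnRel (r : Z → ℝ≥0∞) (t : ℝ≥0∞) (a b : Z) : Prop :=
  a ≠ b ∧ edist a b ≤ t ∧ ∃ w : Z, edist w a ≤ r w ∧ edist w b ≤ r w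

/-- Edge relation of the ray complex `R_t(N)`: pairs `{a,b}`, `a ≠ b`, with
`d(a,b) ≤ t`, such that `b ∈ N_a \ {a}` or `a ∈ N_b \ {b}`. -/
def rrRel (r : Z → ℝ≥0∞) (t : ℝ≥0∞) (a b : Z) : Prop :=
  a ≠ b ∧ edist a b ≤ t ∧ (edist a b ≤ r a ∨ edist b a ≤ r b)

end

/-- Lemma 20: let `Z` be a finite ep-metric space with a fixed complete
neighbourhood `N_x = Z(x, r_x)` for each `x` (all distances within the balls
being finite).  Then:
(1) if `t ≤ r_x` for all `x`, the maps `π₀R_t(N) → π₀V_t(N) → π₀V_t(Z)` are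
bijections;
(2) if `t ≥ r_x` for all `x`, the map `π₀R_t(N) → π₀V_t(N)` is a bijection;
(3) if `t ≥ S ≥ r_x` for all `x`, the map `π₀R_S(N) → π₀R_t(N)` is a bijection.
Bijections of path components mean equality of connectivity relations. -/
theorem complete_nbhd_pi0 {Z : Type*} [Fintype Z] [PseudoEMetricSpace Z]
    (r : Z → ℝ≥0∞) (hfin : ∀ x y : Z, edist x y ≤ r x → edist x y < ⊤)
    (t : ℝ≥0∞) (ht : t ≠ ⊤) :
    ((∀ x : Z, t ≤ r x) → ∀ u v : Z,
      (Relation.ReflTransGen (rrRel r t) u v ↔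
        Relation.ReflTransGen (rnRel r t) u v) ∧
      (Relation.ReflTransGen (rnRel r t) u v ↔
        Relation.ReflTransGen (rvRel t) u v)) ∧
    ((∀ x : Z, r x ≤ t) → ∀ u v : Z,
      Relation.ReflTransGen (rrRel r t) u v ↔
        Relation.ReflTransGen (rnRel r t) u v) ∧
    (∀ S : ℝ≥0∞, (∀ x : Z, r x ≤ S) → S ≤ t → ∀ u v : Z,
      Relation.ReflTransGen (rrRel r S) u v ↔
        Relation.ReflTransGen (rrRel r t) u v) := by

  have rr_to_rn : ∀ {S : ℝ≥0∞} {a b : Z}, rrRel r S a b → rnRel r S a b := by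
    rintro S a b ⟨hab, hd, h | h⟩
    · exact ⟨hab, hd, a, by simp, h⟩
    · exact ⟨hab, hd, b, h, by simp⟩
  refine ⟨?_, ?_, ?_⟩
  · intro hle u v
    have h1 : ∀ {a b : Z}, rnRel r t a b → rrRel r t a b := by
      rintro a b ⟨hab, hd, _⟩
      exact ⟨hab, hd, Or.inl (hd.trans (hle a))⟩
    constructor
    · exact ⟨fun h => Relation.ReflTransGen.mono (fun a b => rr_to_rn) _ _ h,
        fun h => Relation.ReflTransGen.mono (fun a b => h1) _ _ h⟩
    · constructor
      · exact fun h => Relation.ReflTransGen.mono (fun a b hab => hab.2.1) _ _ h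
      · intro h
        induction h with
        | refl => exact .refl
        | tail _ hbc ih =>
          rename_i b c _
          by_cases hbc' : b = c
          · exact hbc' ▸ ih
          · exact ih.tail ⟨hbc', hbc, b, by simp, hbc.trans (hle b)⟩
  · intro hle u v
    constructor
    · exact fun h => Relation.ReflTransGen.mono (fun a b => rr_to_rn) _ _ h
    · intro h
      induction h with
      | refl => exact .refl
      | tail _ hbc ih =>
        rename_i b c _
        obtain ⟨hbc', hd, w, hwb, hwc⟩ := hbc
        have hbw : Relation.ReflTransGen (rrRel r t) b w := by
          by_cases hb : w = b
          · exact hb ▸ .refl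
          · exact .single ⟨fun e => hb e.symm, (edist_comm b w ▸ hwb).trans (hle w),
              Or.inr (hwb.trans (le_refl _) |>.trans (le_refl _) |> fun _ => edist_comm w b ▸ hwb)⟩
        have hwc' : Relation.ReflTransGen (rrRel r t) w c := by
          by_cases hc : w = c
          · exact hc ▸ .refl
          · exact .single ⟨hc, hwc.trans (hle w), Or.inl hwc⟩
        exact ih.trans (hbw.trans hwc')
  · intro S hS hSt u v
    have h1 : ∀ {a b : Z}, rrRel r S a b → rrRel r t a b := by
      rintro a b ⟨hab, hd, h⟩
      exact ⟨hab, hd.trans hSt, h⟩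
    have h2 : ∀ {a b : Z}, rrRel r t a b → rrRel r S a b := by
      rintro a b ⟨hab, hd, h | h⟩
      · exact ⟨hab, h.trans (hS a), Or.inl h⟩
      · exact ⟨hab, (edist_comm a b ▸ h).trans (hS b), Or.inr h⟩
    exact ⟨fun h => Relation.ReflTransGen.mono (fun a b => h1) _ _ h, fun h => Relation.ReflTransGen.mono (fun a b => h2) _ _ h⟩
end

section
/- Let Z be a finite set in which each x ∈ Z has a weighted neighbourhood N_x (with x ∈ N_x and weights d_x(y) ∈ (0,∞) for y ∈ N_x \ {x}). Define the cost c(u,v) ∈ [0,∞] by c(u,u) = 0 and, for u ≠ v, c(u,v) = the minimum of d_u(v) (if v ∈ N_u) and d_v(u) (if u ∈ N_v), with c(u,v) = ∞ if {u,v} is not a ray of any neighbourhood; and let D(z,w) = inf over finite sequences z = z₀, …, z_p = w of Σ_j c(z_j,z_{j+1}) (the amalgamated UMAP ep-metric). Then for every s ∈ [0,∞), two points z, w ∈ Z are joined by a chain with consecutive D-distances ≤ s if and only if they are joined by a chain of rays each of cost c ≤ s; that is, the map π₀R_s(N) → π₀V_s(Z,D) induced by the inclusion of the ray complex into the Vietoris–Rips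 complex of (Z,D) is a bijection for all s ≥ 0. -/
open scoped ENNReal

/-- The infimum of the total cost `Σⱼ c(zⱼ, zⱼ₊₁)` over all finite sequences
`z = z₀, z₁, …, z_p = w` in `Z`. -/
noncomputable def chainInf {Z : Type*} (c : Z → Z → ℝ≥0∞) (z w : Z) : ℝ≥0∞ :=
  ⨅ (n : ℕ) (f : Fin (n + 1) → Z) (_ : f 0 = z) (_ : f (Fin.last n) = w),
    ∑ i : Fin n, c (f i.castSucc) (f i.succ)

open Classical in
/-- The cost of the pair `{u,v}` for the system of weighted neighbourhoods
`N : Z → Set Z` with weights `d`: `c(u,u) = 0`, and for `u ≠ v`, `c(u,v)` is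
the minimum of `d_u(v)` (if `v ∈ N_u`) and `d_v(u)` (if `u ∈ N_v`), being `∞`
if `{u,v}` is a ray of neither neighbourhood. -/
noncomputable def umapCost {Z : Type*} (N : Z → Set Z) (d : Z → Z → ℝ≥0∞)
    (u v : Z) : ℝ≥0∞ :=
  if u = v then 0
  else min (if v ∈ N u then d u v else ⊤) (if u ∈ N v then d v u else ⊤)

private lemma chainInf_le_self {Z : Type*} (c : Z → Z → ℝ≥0∞) (u v : Z) :
    chainInf c u v ≤ c u v := by
  refine iInf_le_of_le 1 (iInf_le_of_le ![u, v] (iInf_le_of_le rfl (iInf_le_of_le rfl ?_)))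
  simp

private lemma chain_rtg {Z : Type*} (R : Z → Z → Prop) :
    ∀ (n : ℕ) (f : Fin (n + 1) → Z),
      (∀ i : Fin n, f i.castSucc = f i.succ ∨ R (f i.castSucc) (f i.succ)) →
      Relation.ReflTransGen R (f 0) (f (Fin.last n))
  | 0, f, _ => by
    have : Fin.last 0 = 0 := rfl
    rw [this]
  | n + 1, f, h => by
    have ih := chain_rtg R n (fun i => f i.castSucc) (fun i => by
      have hh := h i.castSucc
      rwa [Fin.succ_castSucc] at hh)
    have ih' : Relation.ReflTransGen R (f 0) (f (Fin.castSucc (Fin.last n))) := by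
      simpa using ih
    have hstep := h (Fin.last n)
    rw [Fin.succ_last] at hstep
    rcases hstep with he | hr
    · rwa [he] at ih'
    · exact ih'.tail hr

private lemma exists_chain_lt {Z : Type*} (c : Z → Z → ℝ≥0∞) {z w : Z} {t : ℝ≥0∞}
    (h : chainInf c z w < t) :
    ∃ (n : ℕ) (f : Fin (n + 1) → Z), f 0 = z ∧ f (Fin.last n) = w ∧
      ∑ i : Fin n, c (f i.castSucc) (f i.succ) < t := by
  simp only [chainInf, iInf_lt_iff] at h
  obtain ⟨n, f, h0, h1, hlt⟩ := h
  exact ⟨n, f, h0, h1, hlt⟩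

/-- Theorem 27: let `Z` be a finite set with a weighted neighbourhood `N_x`
for each `x` (weights `d_x(y) ∈ (0,∞)` for `y ∈ N_x \ {x}`), and let
`D = chainInf (umapCost N d)` be the amalgamated UMAP ep-metric.  Then for
every `s ∈ [0,∞)`, two points are joined by a chain of rays each of cost `≤ s`
iff they are joined by a chain with consecutive `D`-distances `≤ s`; that is,
the map `π₀R_s(N) → π₀V_s(Z,D)` is a bijection for all `s ≥ 0`. -/
theorem pi0_ray_eq_pi0_umap {Z : Type*} [Fintype Z]
    (N : Z → Set Z) (hmem : ∀ z, z ∈ N z)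
    (d : Z → Z → ℝ≥0∞)
    (hd : ∀ x, ∀ y ∈ N x, y ≠ x → 0 < d x y ∧ d x y < ⊤)
    (s : ℝ≥0∞) (hs : s ≠ ⊤) :
    ∀ z w : Z,
      Relation.ReflTransGen (fun u v => u ≠ v ∧ umapCost N d u v ≤ s) z w ↔
        Relation.ReflTransGen
          (fun u v => chainInf (umapCost N d) u v ≤ s) z w := by
  classical
  -- a separation constant
  obtain ⟨ε, hε, hsep⟩ : ∃ ε, 0 < ε ∧
      ∀ u v : Z, umapCost N d u v ≤ s ∨ s + ε ≤ umapCost N d u v := by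
    by_cases hA : ((Finset.univ : Finset (Z × Z)).filter
        (fun p => ¬ umapCost N d p.1 p.2 ≤ s)).Nonempty
    · obtain ⟨b, hb, hbmin⟩ := Finset.exists_min_image _
        (fun p : Z × Z => umapCost N d p.1 p.2) hA
      set m := umapCost N d b.1 b.2 with hm
      have hsm : s < m := by
        have := (Finset.mem_filter.mp hb).2
        exact lt_of_not_ge this
      refine ⟨m - s, tsub_pos_iff_lt.mpr hsm, fun u v => ?_⟩
      by_cases hc : umapCost N d u v ≤ s
      · exact Or.inl hc
      · right
        have hmem' : (u, v) ∈ (Finset.univ : Finset (Z × Z)).filter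
            (fun p => ¬ umapCost N d p.1 p.2 ≤ s) := by
          simp only [Finset.mem_filter, Finset.mem_univ, true_and]
          exact hc
        have := hbmin _ hmem'
        rw [add_tsub_cancel_of_le hsm.le]
        exact this
    · refine ⟨1, one_pos, fun u v => Or.inl ?_⟩
      by_contra hc
      exact hA ⟨(u, v), by
        simp only [Finset.mem_filter, Finset.mem_univ, true_and]
        exact hc⟩
  have key : ∀ a b : Z, chainInf (umapCost N d) a b ≤ s →
      Relation.ReflTransGen (fun u v => u ≠ v ∧ umapCost N d u v ≤ s) a b := by
    intro a b hab
    have hlt : chainInf (umapCost N d) a b < s + ε :=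
      lt_of_le_of_lt hab (ENNReal.lt_add_right hs hε.ne')
    obtain ⟨n, f, h0, h1, hsum⟩ := exists_chain_lt _ hlt
    subst h0; subst h1
    refine chain_rtg _ n f fun i => ?_
    by_cases he : f i.castSucc = f i.succ
    · exact Or.inl he
    · right
      have h1 : umapCost N d (f i.castSucc) (f i.succ) ≤
          ∑ j : Fin n, umapCost N d (f j.castSucc) (f j.succ) :=
        Finset.single_le_sum
          (f := fun j : Fin n => umapCost N d (f j.castSucc) (f j.succ))
          (fun j _ => zero_le) (Finset.mem_univ i)
      have h2 := h1.trans_lt hsum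
      rcases hsep (f i.castSucc) (f i.succ) with hle | hge
      · exact ⟨he, hle⟩
      · exact absurd h2 (not_lt.mpr hge)
  intro z w
  constructor
  · exact fun h => Relation.ReflTransGen.mono (fun u v huv => (chainInf_le_self _ u v).trans huv.2) _ _ h
  · intro h
    induction h with
    | refl => rfl
    | tail _ hstep ih => exact ih.trans (key _ _ hstep)
end

section
/- Let Z be a finite set in which each x ∈ Z has a weighted neighbourhood N_x (with x ∈ N_x and weights d_x(y) ∈ (0,∞) for y ∈ N_x \ {x}). For each x let D_x be the wedge ep-metric of the rays of N_x on Z (D_x(z,w) = inf over finite paths of sums of costs, where the only finite nonzero costs are d_x(y) on rays {x,y} of N_x), and let D be the amalgamated UMAP ep-metric, D(z,w) = inf over finite paths z = z₀, …, z_p = w of Σ_j min_x D_x(z_j,z_{j+1}). Then for every finite s, the canonical map π₀V(Z,N)_s → π₀V(Z,D)_s is a bijection: two points of Z are joined by a chain in which each consecutive pair {u,v} satisfies D_x(u,v) ≤ s for some x ∈ Z, if and only if they are joined by a chain with consecutive D-distances ≤ s. -/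
open scoped ENNReal

lemma chainInf_le_self' {Z : Type*} (c : Z → Z → ℝ≥0∞) (z w : Z) :
    (⨅ (n : ℕ) (f : Fin (n + 1) → Z) (_ : f 0 = z) (_ : f (Fin.last n) = w),
      ∑ i : Fin n, c (f i.castSucc) (f i.succ)) ≤ c z w := by
  refine iInf_le_of_le 1 (iInf_le_of_le ![z, w] ?_)
  refine iInf_le_of_le (by simp) (iInf_le_of_le (by simp [Fin.last]) ?_)
  simp

lemma exists_le_of_iInf_le {ι : Type*} [Fintype ι] {g : ι → ℝ≥0∞} {s : ℝ≥0∞}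
    (hs : s ≠ ⊤) (h : ⨅ i, g i ≤ s) : ∃ i, g i ≤ s := by
  by_contra hc
  push_neg at hc
  have heq : (⨅ i, g i) = Finset.univ.inf g := by
    simp [Finset.inf_eq_iInf]
  have hlt : s < ⨅ i, g i := by
    rw [heq, Finset.lt_inf_iff (lt_top_iff_ne_top.2 hs)]
    exact fun i _ => hc i
  exact absurd h (not_le.2 hlt)

lemma rtg_of_chain {Z : Type*} (R : Z → Z → Prop) :
    ∀ (n : ℕ) (f : Fin (n + 1) → Z),
      (∀ i : Fin n, R (f i.castSucc) (f i.succ)) →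
        Relation.ReflTransGen R (f 0) (f (Fin.last n)) := by
  intro n
  induction n with
  | zero => intro f _; exact Relation.ReflTransGen.refl
  | succ n ih =>
    intro f h
    have h0 : R (f 0) (f 1) := by
      have := h 0
      simpa using this
    have htail : Relation.ReflTransGen R (f 1) (f (Fin.last (n + 1))) := by
      simpa [Fin.succ_last] using ih (fun i => f i.succ) (fun i => by
        have := h i.succ
        simpa only [Fin.succ_castSucc] using this)
    exact Relation.ReflTransGen.head h0 htail

open Classical in
/-- The cost function of the rays of the weighted neighbourhood `N_x` of `x`:
`c(u,u) = 0`, `c(u,v) = d_x(y)` if `{u,v} = {x,y}` for a ray `{x,y}`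
(`y ∈ N_x \ {x}`), and `c(u,v) = ∞` otherwise. -/
noncomputable def rayCost {Z : Type*} (x : Z) (Nx : Set Z) (d : Z → ℝ≥0∞)
    (u v : Z) : ℝ≥0∞ :=
  if u = v then 0
  else if u = x ∧ v ∈ Nx then d v
  else if v = x ∧ u ∈ Nx then d u
  else ⊤

/-- The wedge ep-metric `D_x` on `Z` of the rays of the weighted neighbourhood
`N_x` of `x`. -/
noncomputable def wedgeMetric {Z : Type*} (x : Z) (Nx : Set Z) (d : Z → ℝ≥0∞) :
    Z → Z → ℝ≥0∞ :=
  chainInf (rayCost x Nx d)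

/-- Theorem 23 (Lemma 2 of [UMAP-stab]): let `Z` be a finite set with a
weighted neighbourhood `N_x` for each `x` (weights `d_x(y) ∈ (0,∞)` for
`y ∈ N_x \ {x}`).  Let `D_x` be the wedge ep-metric of the rays of `N_x`, and
let `D(z,w) = inf` over finite paths `z = z₀, …, z_p = w` of
`Σⱼ min_x D_x(zⱼ, zⱼ₊₁)` be the amalgamated UMAP ep-metric.  Then for every
finite `s`, the canonical map `π₀V(Z,N)_s → π₀V(Z,D)_s` is a bijection: two
points are joined by a chain in which each consecutive pair `{u,v}` satisfies
`D_x(u,v) ≤ s` for some `x`, iff they are joined by a chain with consecutive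
`D`-distances `≤ s`. -/
theorem pi0_umap_excision {Z : Type*} [Fintype Z]
    (N : Z → Set Z) (hmem : ∀ z, z ∈ N z)
    (d : Z → Z → ℝ≥0∞)
    (hd : ∀ x, ∀ y ∈ N x, y ≠ x → 0 < d x y ∧ d x y < ⊤)
    (s : ℝ≥0∞) (hs : s ≠ ⊤) :
    ∀ z w : Z,
      Relation.ReflTransGen
          (fun u v => ∃ x : Z, wedgeMetric x (N x) (d x) u v ≤ s) z w ↔
        Relation.ReflTransGen
          (fun u v =>
            chainInf (fun a b => ⨅ x : Z, wedgeMetric x (N x) (d x) a b) u v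
              ≤ s) z w := by
  classical
  set D : Z → Z → ℝ≥0∞ := fun a b => ⨅ x : Z, wedgeMetric x (N x) (d x) a b
    with hD
  clear_value D
  intro z w
  constructor
  · -- easy direction: a single N-step is a D-step
    refine fun h => Relation.ReflTransGen.mono ?_ z w h
    rintro u v ⟨x, hx⟩
    calc chainInf D u v ≤ D u v := chainInf_le_self' D u v
      _ ≤ wedgeMetric x (N x) (d x) u v := by rw [hD]; exact iInf_le _ x
      _ ≤ s := hx
  · intro h
    induction h with
    | refl => exact Relation.ReflTransGen.refl
    | tail _hab hbc ih =>
      rename_i b c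
      refine ih.trans ?_
      -- from `chainInf D b c ≤ s` produce a chain of N-steps
      -- choose a threshold t > s below all D-values exceeding s
      set T : Finset (Z × Z) := Finset.univ.filter (fun p => s < D p.1 p.2)
        with hT
      clear_value T
      set t : ℝ≥0∞ := T.inf (fun p => D p.1 p.2) with ht
      clear_value t
      have hst : s < t := by
        rw [ht]
        rw [Finset.lt_inf_iff (lt_top_iff_ne_top.2 hs)]
        intro p hp
        rw [hT] at hp
        exact (Finset.mem_filter.1 hp).2
      have hlt : chainInf D b c < t := lt_of_le_of_lt hbc hst
      rw [chainInf] at hlt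
      simp only [iInf_lt_iff] at hlt
      obtain ⟨n, f, hf0, hfl, hsum⟩ := hlt
      have hstep : ∀ i : Fin n, D (f i.castSucc) (f i.succ) ≤ s := by
        intro i
        by_contra hcon
        push_neg at hcon
        have hmemT : (f i.castSucc, f i.succ) ∈ T := by
          rw [hT]; exact Finset.mem_filter.2 ⟨Finset.mem_univ _, hcon⟩
        have : t ≤ D (f i.castSucc) (f i.succ) := by
          rw [ht]; exact Finset.inf_le hmemT
        have hle : D (f i.castSucc) (f i.succ) ≤
            ∑ j : Fin n, D (f j.castSucc) (f j.succ) :=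
          Finset.single_le_sum (f := fun j : Fin n => D (f j.castSucc) (f j.succ))
            (fun j _ => zero_le) (Finset.mem_univ i)
        exact absurd (lt_of_le_of_lt (this.trans hle) hsum) (lt_irrefl t)
      -- each D-step ≤ s gives an N-step, since the iInf over finite Z is attained
      have hstep' : ∀ i : Fin n,
          ∃ x : Z, wedgeMetric x (N x) (d x) (f i.castSucc) (f i.succ) ≤ s := by
        intro i
        have h' := hstep i
        rw [hD] at h'
        exact exists_le_of_iInf_le hs h'
      have := rtg_of_chain
        (fun u v => ∃ x : Z, wedgeMetric x (N x) (d x) u v ≤ s) n f hstep'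
      rwa [hf0, hfl] at this
end
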